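/- arXiv:2305.03795 — 5 statements merged into one kernel-verified Lean document; each statement's English description precedes it below -/
import Mathlib

section
/- Let K ≥ 2 and let X_1, ..., X_K be a RECIPE encoding process of length K satisfying the uniformity condition, with q_i(d) denoting the common probability P(X_i = S) over all d-element nonempty subsets S ⊆ {1,...,i}. Then for every i with 2 ≤ i ≤ K and every d with 1 ≤ d ≤ i−1, it holds that q_{i−1}(d) ≥ q_i(d) + q_i(d+1). -/
open MeasureTheory Finset

/-- Necessity of the RECIPE-feasibility inequalities: for a RECIPE
encoding process `X 1, …, X K` (values in nonempty subsets of `{1,…,K}`, starting from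
`{1}`, each step being Skip, Add, or Replace) satisfying the uniformity condition with
per-subset probabilities `q i d`, one has `q (i-1) d ≥ q i d + q i (d+1)` for all
`2 ≤ i ≤ K` and `1 ≤ d ≤ i-1`. -/
theorem recipe_feasibility_necessary
    {Ω : Type*} [MeasurableSpace Ω] (μ : Measure Ω) [IsProbabilityMeasure μ]
    (K : ℕ) (hK : 2 ≤ K)
    (X : ℕ → Ω → Finset ℕ)
    (hXmeas : ∀ i S, MeasurableSet {ω | X i ω = S})
    (hX1 : ∀ᵐ ω ∂μ, X 1 ω = ({1} : Finset ℕ))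
    (hXsub : ∀ i, 1 ≤ i → i ≤ K →
      ∀ᵐ ω ∂μ, (X i ω).Nonempty ∧ X i ω ⊆ Finset.Icc 1 i)
    (hXstep : ∀ i, 2 ≤ i → i ≤ K →
      ∀ᵐ ω ∂μ, X i ω = X (i - 1) ω ∨ X i ω = insert i (X (i - 1) ω) ∨
        X i ω = ({i} : Finset ℕ))
    (q : ℕ → ℕ → ℝ)
    (hunif : ∀ i, 1 ≤ i → i ≤ K → ∀ S : Finset ℕ, S.Nonempty → S ⊆ Finset.Icc 1 i →
      (μ {ω | X i ω = S}).toReal = q i S.card) :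
    ∀ i d, 2 ≤ i → i ≤ K → 1 ≤ d → d ≤ i - 1 →
      q (i - 1) d ≥ q i d + q i (d + 1) := by
  intro i d h2i hiK h1d hdi
  -- witness set
  set S : Finset ℕ := Finset.Icc 1 d with hS
  have hd_lt_i : d < i := lt_of_le_of_lt hdi (Nat.sub_lt (by omega) one_pos)
  have hSne : S.Nonempty := ⟨1, by simp [hS, h1d]⟩
  have hScard : S.card = d := by simp [hS]
  have hiS : i ∉ S := by simp [hS]; omega
  have hSsub' : S ⊆ Finset.Icc 1 (i - 1) := by
    intro x hx; simp [hS] at hx ⊢; omega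
  have hSsubi : S ⊆ Finset.Icc 1 i := by
    intro x hx; simp [hS] at hx ⊢; omega
  have hTne : (insert i S).Nonempty := ⟨i, mem_insert_self _ _⟩
  have hTcard : (insert i S).card = d + 1 := by
    rw [Finset.card_insert_of_notMem hiS, hScard]
  have hTsub : insert i S ⊆ Finset.Icc 1 i := by
    intro x hx
    rcases Finset.mem_insert.mp hx with h | h
    · simp [h]; omega
    · exact hSsubi h
  have h1i1 : 1 ≤ i - 1 := by omega
  have hi1K : i - 1 ≤ K := by omega
  -- the three events
  set A : Set Ω := {ω | X i ω = S}
  set B : Set Ω := {ω | X i ω = insert i S}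
  set C : Set Ω := {ω | X (i - 1) ω = S}
  have hdisj : Disjoint A B := by
    rw [Set.disjoint_left]
    intro ω hA hB
    have : S = insert i S := hA.symm.trans hB
    exact hiS (this ▸ mem_insert_self i S)
  have hkey : μ (A ∪ B) ≤ μ C := by
    apply measure_mono_ae
    filter_upwards [hXstep i h2i hiK, hXsub (i - 1) h1i1 hi1K] with ω hstep hsub
    intro hω
    have hnotmem : i ∉ X (i - 1) ω := fun h => by
      have := hsub.2 h
      simp at this; omega
    rcases hω with hA | hB
    · -- X i ω = S
      rcases hstep with h | h | h
      · show X (i - 1) ω = S; rw [← h]; exact hA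
      · exact absurd (hA ▸ h ▸ mem_insert_self i (X (i - 1) ω)) hiS
      · exact absurd ((hA.symm.trans h) ▸ Finset.mem_singleton_self i) hiS
    · -- X i ω = insert i S
      rcases hstep with h | h | h
      · exact absurd (h ▸ hB ▸ mem_insert_self i S : i ∈ X (i - 1) ω) hnotmem
      · have heq : insert i (X (i - 1) ω) = insert i S := h ▸ hB
        show X (i - 1) ω = S
        have := congrArg (fun T => Finset.erase T i) heq
        simpa [Finset.erase_insert hnotmem, Finset.erase_insert hiS] using this
      · have heq : insert i S = ({i} : Finset ℕ) := hB ▸ h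
        obtain ⟨x, hx⟩ := hSne
        have : x ∈ ({i} : Finset ℕ) := heq ▸ Finset.mem_insert_of_mem hx
        rw [Finset.mem_singleton] at this
        exact absurd (this ▸ hx) hiS
  have hsum : μ A + μ B ≤ μ C := by
    rw [← measure_union hdisj (hXmeas i (insert i S))]
    exact hkey
  have hfin : ∀ s : Set Ω, μ s ≠ ⊤ := fun s => measure_ne_top μ s
  have hreal : (μ A).toReal + (μ B).toReal ≤ (μ C).toReal := by
    rw [← ENNReal.toReal_add (hfin A) (hfin B)]
    exact ENNReal.toReal_mono (hfin C) hsum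
  have hqA : (μ A).toReal = q i d := by
    rw [← hScard]; exact hunif i (by omega) hiK S hSne hSsubi
  have hqB : (μ B).toReal = q i (d + 1) := by
    rw [← hTcard]; exact hunif i (by omega) hiK (insert i S) hTne hTsub
  have hqC : (μ C).toReal = q (i - 1) d := by
    rw [← hScard]; exact hunif (i - 1) h1i1 hi1K S hSne hSsub'
  rw [← hqA, ← hqB, ← hqC] at *
  exact hreal
end

section
/- Let K ≥ 1 and let q_i(d), for 1 ≤ i ≤ K and 1 ≤ d ≤ i, be nonnegative reals with q_1(1) = 1, with Σ_{d=1}^{i} C(i,d)·q_i(d) = 1 for every i, and satisfying q_{i−1}(d) ≥ q_i(d) + q_i(d+1) for all 2 ≤ i ≤ K and 1 ≤ d ≤ i−1. Then there exist probability mass functions ν_1, ..., ν_K on the finite subsets of {1,...,K} and, for each 2 ≤ i ≤ K, a Markov kernel κ_i assigning to each nonempty subset S' ⊆ {1,...,i−1} a probability mass function supported on the three subsets {S', S' ∪ {i}, {i}}, such that: ν_1 is the point mass at {1}; ν_i is obtained by applying κ_i to ν_{i−1} (i.e., ν_i(S) = Σ_{S'} ν_{i−1}(S')·κ_i(S')(S));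 and for every 1 ≤ i ≤ K and every nonempty S ⊆ {1,...,i}, ν_i(S) = q_i(|S|). -/
open Finset

noncomputable def nuF (K : ℕ) (q : ℕ → ℕ → ℝ) (i : ℕ) (S : Finset ℕ) : ℝ :=
  if 1 ≤ i ∧ i ≤ K ∧ S.Nonempty ∧ S ⊆ Finset.Icc 1 i then q i S.card else 0

noncomputable def kapF (q : ℕ → ℕ → ℝ) (i : ℕ) (S' S : Finset ℕ) : ℝ :=
  if S'.Nonempty ∧ S' ⊆ Finset.Icc 1 (i-1) then
    (if S = S' then q i S'.card / q (i-1) S'.card else 0)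
    + (if S = insert i S' then q i (S'.card + 1) / q (i-1) S'.card else 0)
    + (if S = ({i} : Finset ℕ) then
        1 - q i S'.card / q (i-1) S'.card - q i (S'.card + 1) / q (i-1) S'.card else 0)
  else 0


lemma sum_powerset_ne (n : ℕ) (f : ℕ → ℝ) :
    ∑ S ∈ (Finset.Icc 1 n).powerset, (if S.Nonempty then f S.card else 0)
      = ∑ d ∈ Finset.Icc 1 n, (n.choose d : ℝ) * f d := by
  have h1 : ∀ S : Finset ℕ, (if S.Nonempty then f S.card else 0)
      = (fun d => if 1 ≤ d then f d else 0) S.card := by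
    intro S
    by_cases h : S.Nonempty
    · simp [h, Nat.one_le_iff_ne_zero, Finset.card_ne_zero.mpr h]
    · rw [Finset.not_nonempty_iff_eq_empty] at h
      simp [h]
  calc ∑ S ∈ (Finset.Icc 1 n).powerset, (if S.Nonempty then f S.card else 0)
      = ∑ S ∈ (Finset.Icc 1 n).powerset, (fun d => if 1 ≤ d then f d else 0) S.card :=
        Finset.sum_congr rfl fun S _ => h1 S
    _ = ∑ m ∈ Finset.range (#(Finset.Icc 1 n) + 1),
          (#(Finset.Icc 1 n)).choose m • (fun d => if 1 ≤ d then f d else 0) m :=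
        Finset.sum_powerset_apply_card (f := fun d => if 1 ≤ d then f d else 0)
          (x := Finset.Icc 1 n)
    _ = ∑ d ∈ Finset.Icc 1 n, (n.choose d : ℝ) * f d := by
        have hc : #(Finset.Icc 1 n) = n := by simp
        rw [hc]
        have hr : Finset.range (n + 1) = insert 0 (Finset.Icc 1 n) := by
          ext m; simp; omega
        rw [hr, Finset.sum_insert (by simp)]
        simp only [if_neg (by norm_num : ¬ (1:ℕ) ≤ 0), smul_zero, zero_add]
        refine Finset.sum_congr rfl fun d hd => ?_
        rw [Finset.mem_Icc] at hd
        rw [if_pos hd.1]; simp [nsmul_eq_mul]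

lemma chain_sum (q : ℕ → ℕ → ℝ) (j : ℕ) (hj : 1 ≤ j)
    (hsum : ∑ d ∈ Finset.Icc 1 (j+1), ((j+1).choose d : ℝ) * q (j+1) d = 1) :
    ∑ d ∈ Finset.Icc 1 j, (j.choose d : ℝ) * (q (j+1) d + q (j+1) (d+1))
      = 1 - q (j+1) 1 := by
  have hA : ∑ d ∈ Finset.Icc 1 j, (j.choose d : ℝ) * q (j+1) d
      = ∑ d ∈ Finset.Icc 1 (j+1), (j.choose d : ℝ) * q (j+1) d := by
    refine Finset.sum_subset (Finset.Icc_subset_Icc_right (by omega)) ?_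
    intro d hd hd'
    rw [Finset.mem_Icc] at hd; rw [Finset.mem_Icc] at hd'
    have : d = j + 1 := by omega
    subst this
    rw [Nat.choose_eq_zero_of_lt (by omega)]; simp
  have hB : ∑ d ∈ Finset.Icc 1 j, (j.choose d : ℝ) * q (j+1) (d+1)
      = ∑ e ∈ Finset.Icc 2 (j+1), (j.choose (e-1) : ℝ) * q (j+1) e := by
    refine Finset.sum_nbij' (fun d => d + 1) (fun e => e - 1) ?_ ?_ ?_ ?_ ?_
    · intro d hd; simp only [Finset.mem_Icc] at *; omega
    · intro e he; simp only [Finset.mem_Icc] at *; omega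
    · intro d hd; simp only [Finset.mem_Icc] at *; omega
    · intro e he; simp only [Finset.mem_Icc] at *; omega
    · intro d hd; simp
  have hC : Finset.Icc 1 (j+1) = insert 1 (Finset.Icc 2 (j+1)) := by
    ext m; simp; omega
  have hD : ∑ e ∈ Finset.Icc 2 (j+1), (j.choose (e-1) : ℝ) * q (j+1) e
      = (∑ e ∈ Finset.Icc 1 (j+1), (j.choose (e-1) : ℝ) * q (j+1) e) - q (j+1) 1 := by
    rw [hC, Finset.sum_insert (by simp)]
    simp
  have hP : ∑ d ∈ Finset.Icc 1 (j+1), ((j.choose d : ℝ) + (j.choose (d-1) : ℝ)) * q (j+1) d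
      = 1 := by
    rw [← hsum]
    refine Finset.sum_congr rfl fun d hd => ?_
    rw [Finset.mem_Icc] at hd
    obtain ⟨k, rfl⟩ : ∃ k, d = k + 1 := ⟨d - 1, by omega⟩
    have hcc : (((j+1).choose (k+1) : ℕ) : ℝ)
        = ((j.choose (k+1) : ℕ) : ℝ) + ((j.choose k : ℕ) : ℝ) := by
      rw [Nat.choose_succ_succ]; push_cast; try ring
    rw [Nat.add_sub_cancel, hcc]
  have hsplit : ∑ d ∈ Finset.Icc 1 j, (j.choose d : ℝ) * (q (j+1) d + q (j+1) (d+1))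
      = (∑ d ∈ Finset.Icc 1 j, (j.choose d : ℝ) * q (j+1) d)
        + ∑ d ∈ Finset.Icc 1 j, (j.choose d : ℝ) * q (j+1) (d+1) := by
    rw [← Finset.sum_add_distrib]; exact Finset.sum_congr rfl fun d _ => by ring
  have hmerge : (∑ d ∈ Finset.Icc 1 (j+1), (j.choose d : ℝ) * q (j+1) d)
      + ∑ e ∈ Finset.Icc 1 (j+1), (j.choose (e-1) : ℝ) * q (j+1) e
      = ∑ d ∈ Finset.Icc 1 (j+1), ((j.choose d : ℝ) + (j.choose (d-1) : ℝ)) * q (j+1) d := by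
    rw [← Finset.sum_add_distrib]; exact Finset.sum_congr rfl fun d _ => by ring
  rw [hsplit, hA, hB, hD]
  linarith [hmerge, hP]

/-- Sufficiency of the RECIPE-feasibility inequalities: any XDD sequence
`q` satisfying them can be realized by a sequence of pmfs `ν 1, …, ν K` on subsets of
`{1,…,K}` evolving by Markov kernels `κ i` supported, from each nonempty
`S' ⊆ {1,…,i-1}`, on the three subsets `{S', S' ∪ {i}, {i}}`, with
`ν 1 = δ_{{1}}` and `ν i S = q i |S|` for every nonempty `S ⊆ {1,…,i}`. -/
theorem recipe_feasibility_sufficient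
    (K : ℕ) (hK : 1 ≤ K) (q : ℕ → ℕ → ℝ)
    (hq0 : ∀ i d, 1 ≤ i → i ≤ K → 1 ≤ d → d ≤ i → 0 ≤ q i d)
    (hq1 : q 1 1 = 1)
    (hqsum : ∀ i, 1 ≤ i → i ≤ K →
      ∑ d ∈ Finset.Icc 1 i, (i.choose d : ℝ) * q i d = 1)
    (hfeas : ∀ i d, 2 ≤ i → i ≤ K → 1 ≤ d → d ≤ i - 1 →
      q (i - 1) d ≥ q i d + q i (d + 1)) :
    ∃ (ν : ℕ → Finset ℕ → ℝ) (κ : ℕ → Finset ℕ → Finset ℕ → ℝ),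
      -- each ν i is a probability mass function on the subsets of {1,…,K}
      (∀ i S, 0 ≤ ν i S) ∧
      (∀ i, 1 ≤ i → i ≤ K → ∑ S ∈ (Finset.Icc 1 K).powerset, ν i S = 1) ∧
      (∀ i S, ν i S ≠ 0 → S ⊆ Finset.Icc 1 K) ∧
      -- ν 1 is the point mass at {1}
      (∀ S : Finset ℕ, ν 1 S = if S = ({1} : Finset ℕ) then 1 else 0) ∧
      -- κ i is a Markov kernel supported on the three admissible successors
      (∀ i, 2 ≤ i → i ≤ K → ∀ S' : Finset ℕ, S'.Nonempty → S' ⊆ Finset.Icc 1 (i - 1) →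
        (∀ S, 0 ≤ κ i S' S) ∧
        (∀ S, κ i S' S ≠ 0 →
          S = S' ∨ S = insert i S' ∨ S = ({i} : Finset ℕ)) ∧
        (∑ S ∈ (Finset.Icc 1 K).powerset, κ i S' S = 1)) ∧
      -- ν i is obtained by applying κ i to ν (i-1)
      (∀ i, 2 ≤ i → i ≤ K → ∀ S ∈ (Finset.Icc 1 K).powerset,
        ν i S = ∑ S' ∈ (Finset.Icc 1 K).powerset, ν (i - 1) S' * κ i S' S) ∧
      -- the uniformity condition with per-subset probabilities q
      (∀ i, 1 ≤ i → i ≤ K → ∀ S : Finset ℕ, S.Nonempty → S ⊆ Finset.Icc 1 i →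
        ν i S = q i S.card) := by
  -- helper facts
  have hcard : ∀ (n : ℕ) (S : Finset ℕ), S ⊆ Finset.Icc 1 n → S.card ≤ n := by
    intro n S h
    have := Finset.card_le_card h
    simpa using this
  have hdq : ∀ j d, 1 ≤ j → j + 1 ≤ K → 1 ≤ d → d ≤ j → q j d = 0 →
      q (j+1) d = 0 ∧ q (j+1) (d+1) = 0 := by
    intro j d hj hjK hd1 hdj h0
    have hf := hfeas (j+1) d (by omega) hjK hd1 (by omega)
    simp only [Nat.add_sub_cancel] at hf
    have h1 := hq0 (j+1) d (by omega) hjK hd1 (by omega)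
    have h2 := hq0 (j+1) (d+1) (by omega) hjK (by omega) (by omega)
    constructor <;> linarith
  have hm1 : ∀ j d, 1 ≤ j → j + 1 ≤ K → 1 ≤ d → d ≤ j →
      q j d * (q (j+1) d / q j d) = q (j+1) d := by
    intro j d hj hjK hd1 hdj
    by_cases h0 : q j d = 0
    · rw [h0, (hdq j d hj hjK hd1 hdj h0).1]; simp
    · field_simp
  have hm2 : ∀ j d, 1 ≤ j → j + 1 ≤ K → 1 ≤ d → d ≤ j →
      q j d * (q (j+1) (d+1) / q j d) = q (j+1) (d+1) := by
    intro j d hj hjK hd1 hdj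
    by_cases h0 : q j d = 0
    · rw [h0, (hdq j d hj hjK hd1 hdj h0).2]; simp
    · field_simp
  have hm3 : ∀ j d, 1 ≤ j → j + 1 ≤ K → 1 ≤ d → d ≤ j →
      q j d * (1 - q (j+1) d / q j d - q (j+1) (d+1) / q j d)
        = q j d - q (j+1) d - q (j+1) (d+1) := by
    intro j d hj hjK hd1 hdj
    by_cases h0 : q j d = 0
    · obtain ⟨e1, e2⟩ := hdq j d hj hjK hd1 hdj h0
      rw [h0, e1, e2]; simp
    · field_simp; try ring
  refine ⟨nuF K q, kapF q, ?_, ?_, ?_, ?_, ?_, ?_, ?_⟩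
  · -- nonnegativity of ν
    intro i S
    simp only [nuF]
    split_ifs with h
    · exact hq0 i S.card h.1 h.2.1 (Finset.card_pos.mpr h.2.2.1) (hcard i S h.2.2.2)
    · exact le_rfl
  · -- sums to 1
    intro i h1 h2
    have hstep : ∑ S ∈ (Finset.Icc 1 i).powerset, nuF K q i S
        = ∑ S ∈ (Finset.Icc 1 K).powerset, nuF K q i S := by
      refine Finset.sum_subset (Finset.powerset_mono.mpr (Finset.Icc_subset_Icc_right h2)) ?_
      intro S hS hS'
      rw [Finset.mem_powerset] at hS'
      simp only [nuF]
      rw [if_neg]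
      tauto
    rw [← hstep]
    have hpt : ∀ S ∈ (Finset.Icc 1 i).powerset, nuF K q i S
        = if S.Nonempty then q i S.card else 0 := by
      intro S hS
      rw [Finset.mem_powerset] at hS
      by_cases h : S.Nonempty
      · rw [if_pos h]; simp only [nuF]; rw [if_pos ⟨h1, h2, h, hS⟩]
      · rw [if_neg h]; simp only [nuF]; rw [if_neg (by tauto)]
    rw [Finset.sum_congr rfl hpt, sum_powerset_ne, hqsum i h1 h2]
  · -- support of ν
    intro i S h
    simp only [nuF] at h
    split_ifs at h with hcond
    · exact hcond.2.2.2.trans (Finset.Icc_subset_Icc_right hcond.2.1)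
    · exact absurd rfl h
  · -- ν 1 is point mass at {1}
    intro S
    by_cases h : S = ({1} : Finset ℕ)
    · subst h
      rw [if_pos rfl]
      simp only [nuF]
      rw [if_pos]
      · simpa using hq1
      · refine ⟨le_rfl, hK, Finset.singleton_nonempty 1, ?_⟩
        simp
    · rw [if_neg h]
      simp only [nuF]
      rw [if_neg]
      rintro ⟨-, -, hne, hsub⟩
      rw [Finset.Icc_self] at hsub
      rcases Finset.subset_singleton_iff.mp hsub with rfl | rfl
      · exact hne.ne_empty rfl
      · exact h rfl
  · -- kernel properties
    intro i hi2 hiK S' hne hsub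
    obtain ⟨j, rfl⟩ : ∃ j, i = j + 1 := ⟨i - 1, by omega⟩
    simp only [Nat.add_sub_cancel] at hsub ⊢
    have hj1 : 1 ≤ j := by omega
    set d := S'.card with hd
    have hd1 : 1 ≤ d := Finset.card_pos.mpr hne
    have hdj : d ≤ j := hcard j S' hsub
    have hiS' : (j+1) ∉ S' := by
      intro h
      have := hsub h
      rw [Finset.mem_Icc] at this
      omega
    have hq01 : 0 ≤ q (j+1) d := hq0 (j+1) d (by omega) hiK hd1 (by omega)
    have hq02 : 0 ≤ q (j+1) (d+1) := hq0 (j+1) (d+1) (by omega) hiK (by omega) (by omega)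
    have hq03 : 0 ≤ q j d := hq0 j d hj1 (by omega) hd1 hdj
    have hfeas' : q j d ≥ q (j+1) d + q (j+1) (d+1) := by
      have := hfeas (j+1) d (by omega) hiK hd1 (by omega)
      simpa using this
    have h3 : 0 ≤ 1 - q (j+1) d / q j d - q (j+1) (d+1) / q j d := by
      rcases eq_or_lt_of_le hq03 with h | h
      · rw [← h, div_zero, div_zero]; norm_num
      · have hle : (q (j+1) d + q (j+1) (d+1)) / q j d ≤ 1 := (div_le_one h).mpr hfeas'
        have he : q (j+1) d / q j d + q (j+1) (d+1) / q j d
            = (q (j+1) d + q (j+1) (d+1)) / q j d := by ring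
        linarith
    refine ⟨?_, ?_, ?_⟩
    · intro S
      simp only [kapF, Nat.add_sub_cancel]
      rw [if_pos ⟨hne, hsub⟩]
      refine add_nonneg (add_nonneg ?_ ?_) ?_
      · split_ifs
        · exact div_nonneg hq01 hq03
        · exact le_rfl
      · split_ifs
        · exact div_nonneg hq02 hq03
        · exact le_rfl
      · split_ifs
        · exact h3
        · exact le_rfl
    · intro S hS
      by_contra hcon
      push_neg at hcon
      obtain ⟨e1, e2, e3⟩ := hcon
      simp only [kapF, Nat.add_sub_cancel] at hS
      rw [if_pos ⟨hne, hsub⟩, if_neg e1, if_neg e2, if_neg e3] at hS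
      simp at hS
    · have hunf : ∀ S, kapF q (j+1) S' S
          = (if S = S' then q (j+1) d / q j d else 0)
            + (if S = insert (j+1) S' then q (j+1) (d+1) / q j d else 0)
            + (if S = ({j+1} : Finset ℕ) then
                1 - q (j+1) d / q j d - q (j+1) (d+1) / q j d else 0) := by
        intro S
        simp only [kapF, Nat.add_sub_cancel]
        rw [if_pos ⟨hne, hsub⟩]
      rw [Finset.sum_congr rfl fun S _ => hunf S]
      rw [Finset.sum_add_distrib, Finset.sum_add_distrib,
        Finset.sum_ite_eq', Finset.sum_ite_eq', Finset.sum_ite_eq']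
      have m1 : S' ∈ (Finset.Icc 1 K).powerset :=
        Finset.mem_powerset.mpr (hsub.trans (Finset.Icc_subset_Icc_right (by omega)))
      have m2 : insert (j+1) S' ∈ (Finset.Icc 1 K).powerset := by
        rw [Finset.mem_powerset]
        refine Finset.insert_subset ?_ (hsub.trans (Finset.Icc_subset_Icc_right (by omega)))
        rw [Finset.mem_Icc]; omega
      have m3 : ({j+1} : Finset ℕ) ∈ (Finset.Icc 1 K).powerset := by
        rw [Finset.mem_powerset, Finset.singleton_subset_iff, Finset.mem_Icc]; omega
      rw [if_pos m1, if_pos m2, if_pos m3]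
      ring
  · -- evolution
    intro i hi2 hiK S hSP
    rw [Finset.mem_powerset] at hSP
    obtain ⟨j, rfl⟩ : ∃ j, i = j + 1 := ⟨i - 1, by omega⟩
    simp only [Nat.add_sub_cancel]
    have hj1 : 1 ≤ j := by omega
    have hjK : j ≤ K := by omega
    have hnuzero : ∀ S' : Finset ℕ, ¬(S'.Nonempty ∧ S' ⊆ Finset.Icc 1 j) →
        nuF K q j S' = 0 := by
      intro S' h
      simp only [nuF]
      rw [if_neg]
      tauto
    have hnuval : ∀ S' : Finset ℕ, S'.Nonempty → S' ⊆ Finset.Icc 1 j →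
        nuF K q j S' = q j S'.card := by
      intro S' h1 h2
      simp only [nuF]
      rw [if_pos ⟨hj1, hjK, h1, h2⟩]
    by_cases hiS : (j+1) ∈ S
    · by_cases hSi : S = ({j+1} : Finset ℕ)
      · subst hSi
        -- LHS
        have hL : nuF K q (j+1) ({j+1} : Finset ℕ) = q (j+1) 1 := by
          simp only [nuF]
          rw [if_pos]
          · simp
          · exact ⟨by omega, hiK, Finset.singleton_nonempty _, by
              rw [Finset.singleton_subset_iff, Finset.mem_Icc]; omega⟩
        rw [hL]
        -- RHS: restrict
        have hrestrict : ∑ S' ∈ (Finset.Icc 1 j).powerset,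
              nuF K q j S' * kapF q (j+1) S' ({j+1} : Finset ℕ)
            = ∑ S' ∈ (Finset.Icc 1 K).powerset,
              nuF K q j S' * kapF q (j+1) S' ({j+1} : Finset ℕ) := by
          refine Finset.sum_subset
            (Finset.powerset_mono.mpr (Finset.Icc_subset_Icc_right hjK)) ?_
          intro S' hS' hS''
          rw [Finset.mem_powerset] at hS''
          rw [hnuzero S' (by tauto), zero_mul]
        rw [← hrestrict]
        have hpt : ∀ S' ∈ (Finset.Icc 1 j).powerset,
            nuF K q j S' * kapF q (j+1) S' ({j+1} : Finset ℕ)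
            = if S'.Nonempty then
                (q j S'.card - q (j+1) S'.card - q (j+1) (S'.card + 1)) else 0 := by
          intro S' hS'
          rw [Finset.mem_powerset] at hS'
          by_cases hne : S'.Nonempty
          · rw [if_pos hne, hnuval S' hne hS']
            have hiS' : (j+1) ∉ S' := by
              intro h
              have := hS' h
              rw [Finset.mem_Icc] at this
              omega
            have e1 : ({j+1} : Finset ℕ) ≠ S' := by
              intro h
              exact hiS' (h ▸ Finset.mem_singleton_self (j+1))
            have e2 : ({j+1} : Finset ℕ) ≠ insert (j+1) S' := by
              intro h
              have hc : (insert (j+1) S').card = S'.card + 1 :=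
                Finset.card_insert_of_notMem hiS'
              rw [← h, Finset.card_singleton] at hc
              have h1c := Finset.card_pos.mpr hne
              omega
            simp only [kapF, Nat.add_sub_cancel]
            rw [if_pos ⟨hne, hS'⟩, if_neg e1, if_neg e2]
            simp only [if_true]
            rw [zero_add, zero_add]
            exact hm3 j S'.card hj1 hiK (Finset.card_pos.mpr hne) (hcard j S' hS')
          · rw [if_neg hne, hnuzero S' (by tauto), zero_mul]
        have hps := sum_powerset_ne j (fun d => q j d - q (j+1) d - q (j+1) (d+1))
        rw [Finset.sum_congr rfl hpt, hps]
        have hsplit : ∑ d ∈ Finset.Icc 1 j,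
              (j.choose d : ℝ) * (q j d - q (j+1) d - q (j+1) (d+1))
            = (∑ d ∈ Finset.Icc 1 j, (j.choose d : ℝ) * q j d)
              - ∑ d ∈ Finset.Icc 1 j, (j.choose d : ℝ) * (q (j+1) d + q (j+1) (d+1)) := by
          rw [← Finset.sum_sub_distrib]
          exact Finset.sum_congr rfl fun d _ => by ring
        rw [hsplit, hqsum j hj1 hjK, chain_sum q j hj1 (hqsum (j+1) (by omega) hiK)]
        ring
      · -- i ∈ S, S ≠ {i}
        set T := S.erase (j+1) with hT
        have hTS : T ⊆ Finset.Icc 1 K := (Finset.erase_subset _ _).trans hSP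
        have hnsub : ¬ S ⊆ ({j+1} : Finset ℕ) := by
          intro h
          rcases Finset.subset_singleton_iff.mp h with rfl | rfl
          · exact absurd hiS (Finset.notMem_empty _)
          · exact hSi rfl
        obtain ⟨x, hxS, hx1⟩ := Finset.not_subset.mp hnsub
        have hTne : T.Nonempty :=
          ⟨x, Finset.mem_erase.mpr ⟨by simpa using hx1, hxS⟩⟩
        have hins : insert (j+1) T = S := Finset.insert_erase hiS
        rw [Finset.sum_eq_single_of_mem T (Finset.mem_powerset.mpr hTS) ?_]
        · by_cases hsub : S ⊆ Finset.Icc 1 (j+1)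
          · have hTsub : T ⊆ Finset.Icc 1 j := by
              intro x hx
              obtain ⟨hx1, hx2⟩ := Finset.mem_erase.mp hx
              have := hsub hx2
              rw [Finset.mem_Icc] at this ⊢
              omega
            have hL : nuF K q (j+1) S = q (j+1) S.card := by
              simp only [nuF]
              rw [if_pos ⟨by omega, hiK, ⟨_, hiS⟩, hsub⟩]
            rw [hL, hnuval T hTne hTsub]
            have e1 : S ≠ T := by
              intro h
              exact (Finset.notMem_erase (j+1) S) (hT ▸ h ▸ hiS)
            have e3 : S ≠ ({j+1} : Finset ℕ) := hSi
            simp only [kapF, Nat.add_sub_cancel]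
            rw [if_pos ⟨hTne, hTsub⟩, if_neg e1, if_pos hins.symm, if_neg e3]
            rw [add_zero, zero_add]
            have hcT : T.card + 1 = S.card := Finset.card_erase_add_one hiS
            rw [hm2 j T.card hj1 hiK (Finset.card_pos.mpr hTne) (hcard j T hTsub), hcT]
          · have hTnsub : ¬ T ⊆ Finset.Icc 1 j := by
              intro h
              apply hsub
              rw [← hins]
              refine Finset.insert_subset ?_ (h.trans (Finset.Icc_subset_Icc_right (by omega)))
              rw [Finset.mem_Icc]; omega
            rw [hnuzero T (by tauto), zero_mul]
            simp only [nuF]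
            rw [if_neg (by tauto)]
        · intro S' hS'P hS'T
          by_cases hv : S'.Nonempty ∧ S' ⊆ Finset.Icc 1 j
          · have hiS' : (j+1) ∉ S' := by
              intro h
              have := hv.2 h
              rw [Finset.mem_Icc] at this
              omega
            have e1 : S ≠ S' := by
              intro h
              exact hiS' (h ▸ hiS)
            have e2 : S ≠ insert (j+1) S' := by
              intro h
              apply hS'T
              rw [hT, h, Finset.erase_insert hiS']
            simp only [kapF, Nat.add_sub_cancel]
            rw [if_pos hv, if_neg e1, if_neg e2, if_neg hSi]
            simp
          · rw [hnuzero S' hv, zero_mul]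
    · -- i ∉ S
      rw [Finset.sum_eq_single_of_mem S (Finset.mem_powerset.mpr hSP) ?_]
      · by_cases hv : S.Nonempty ∧ S ⊆ Finset.Icc 1 j
        · have e2 : S ≠ insert (j+1) S := by
            intro h
            exact hiS (h ▸ Finset.mem_insert_self _ _)
          have e3 : S ≠ ({j+1} : Finset ℕ) := by
            intro h
            exact hiS (h ▸ Finset.mem_singleton_self _)
          have hL : nuF K q (j+1) S = q (j+1) S.card := by
            simp only [nuF]
            rw [if_pos ⟨by omega, hiK, hv.1,
              hv.2.trans (Finset.Icc_subset_Icc_right (by omega))⟩]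
          rw [hL, hnuval S hv.1 hv.2]
          simp only [kapF, Nat.add_sub_cancel]
          rw [if_pos hv, if_neg e2, if_neg e3]
          simp only [if_true]
          rw [add_zero, add_zero]
          exact (hm1 j S.card hj1 hiK (Finset.card_pos.mpr hv.1) (hcard j S hv.2)).symm
        · rw [hnuzero S hv, zero_mul]
          simp only [nuF]
          rw [if_neg]
          rintro ⟨-, -, hne, hs⟩
          refine hv ⟨hne, fun x hx => ?_⟩
          have hxi := hs hx
          rw [Finset.mem_Icc] at hxi ⊢
          have : x ≠ j + 1 := fun e => hiS (e ▸ hx)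
          omega
      · intro S' hS'P hS'S
        by_cases hv : S'.Nonempty ∧ S' ⊆ Finset.Icc 1 j
        · have e1 : S ≠ S' := fun h => hS'S h.symm
          have e2 : S ≠ insert (j+1) S' := by
            intro h
            exact hiS (h ▸ Finset.mem_insert_self _ _)
          have e3 : S ≠ ({j+1} : Finset ℕ) := by
            intro h
            exact hiS (h ▸ Finset.mem_singleton_self _)
          simp only [kapF, Nat.add_sub_cancel]
          rw [if_pos hv, if_neg e1, if_neg e2, if_neg e3]
          simp
        · rw [hnuzero S' hv, zero_mul]
  · -- uniformity
    intro i h1 h2 S hne hsub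
    simp only [nuF]
    rw [if_pos ⟨h1, h2, hne, hsub⟩]
end

section
/- Fix i ≥ 2 and nonnegative reals q_{i−1}(d) (1 ≤ d ≤ i−1) and q_i(d) (1 ≤ d ≤ i) with Σ_{d=1}^{i−1} C(i−1,d)·q_{i−1}(d) = 1, Σ_{d=1}^{i} C(i,d)·q_i(d) = 1, and q_{i−1}(d) ≥ q_i(d) + q_i(d+1) for all 1 ≤ d ≤ i−1. Define p_A(i,d) = q_i(d+1)/q_{i−1}(d) and p_S(i,d) = q_i(d)/q_{i−1}(d) when q_{i−1}(d) > 0, and p_A(i,d) = p_S(i,d) = 0 otherwise, and set p_R(i,d) = 1 − p_A(i,d) − p_S(i,d). Let ν be a probability mass function on the nonempty subsets of {1,...,i−1} with ν(S') = q_{i−1}(|S'|) for every nonempty S' ⊆ {1,...,i−1}, and define ν' on subsets S ⊆ {1,...,i} by: ν'(S) = ν(S)·p_S(i,|S|) if i ∉ S; ν'(S) = ν(S∖{i})·p_A(i,|S|−1) if i ∈ S and S ≠ {i}; and ν'({i}) = Σ_{S'} ν(S')·p_R(i,|S'|). Then ν' is a probability mass function and ν'(S) = q_i(|S|) for every nonempty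 S ⊆ {1,...,i}. -/
open Finset

private lemma shift1 (n : ℕ) (f : ℕ → ℝ) :
    ∑ d ∈ Finset.Icc 1 n, f d = ∑ e ∈ Finset.range n, f (e + 1) := by
  rw [← Finset.Ico_add_one_right_eq_Icc, Finset.sum_Ico_eq_sum_range]
  exact Finset.sum_congr (by simp) fun e _ => by rw [Nat.add_comm]

/-- Correctness of one step of the APA designation (Equation (2)):
starting from the uniform pmf `ν` with per-subset probabilities `qprev` on the nonempty
subsets of `{1,…,i-1}`, performing Skip / Add / Replace with the probabilities
`pS, pA, pR` produces a pmf `ν'` with `ν' S = qcur |S|` for every nonempty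
`S ⊆ {1,…,i}`. -/
theorem recipe_apa_step_correct
    (i : ℕ) (hi : 2 ≤ i)
    (qprev qcur : ℕ → ℝ)
    (hqprev0 : ∀ d, 1 ≤ d → d ≤ i - 1 → 0 ≤ qprev d)
    (hqcur0 : ∀ d, 1 ≤ d → d ≤ i → 0 ≤ qcur d)
    (hqprevsum : ∑ d ∈ Finset.Icc 1 (i - 1), ((i - 1).choose d : ℝ) * qprev d = 1)
    (hqcursum : ∑ d ∈ Finset.Icc 1 i, (i.choose d : ℝ) * qcur d = 1)
    (hfeas : ∀ d, 1 ≤ d → d ≤ i - 1 → qprev d ≥ qcur d + qcur (d + 1))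
    (pA pS pR : ℕ → ℝ)
    (hpA : ∀ d, pA d = if 0 < qprev d then qcur (d + 1) / qprev d else 0)
    (hpS : ∀ d, pS d = if 0 < qprev d then qcur d / qprev d else 0)
    (hpR : ∀ d, pR d = 1 - pA d - pS d)
    (ν : Finset ℕ → ℝ)
    (hν0 : ∀ S, 0 ≤ ν S)
    (hνsupp : ∀ S, ν S ≠ 0 → S.Nonempty ∧ S ⊆ Finset.Icc 1 (i - 1))
    (hνsum : ∑ S ∈ (Finset.Icc 1 (i - 1)).powerset, ν S = 1)
    (hνq : ∀ S : Finset ℕ, S.Nonempty → S ⊆ Finset.Icc 1 (i - 1) →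
      ν S = qprev S.card)
    (ν' : Finset ℕ → ℝ)
    (hν' : ∀ S : Finset ℕ, S ⊆ Finset.Icc 1 i →
      ν' S =
        if i ∉ S then ν S * pS S.card
        else if S ≠ ({i} : Finset ℕ) then ν (S.erase i) * pA (S.card - 1)
        else ∑ S' ∈ (Finset.Icc 1 (i - 1)).powerset, ν S' * pR S'.card) :
    (∀ S : Finset ℕ, S ⊆ Finset.Icc 1 i → 0 ≤ ν' S) ∧
    (∑ S ∈ (Finset.Icc 1 i).powerset, ν' S = 1) ∧
    (∀ S : Finset ℕ, S.Nonempty → S ⊆ Finset.Icc 1 i → ν' S = qcur S.card) := by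
  obtain ⟨m, rfl⟩ : ∃ m, i = m + 1 := ⟨i - 1, by omega⟩
  simp only [Nat.add_sub_cancel] at *
  have hm1 : 1 ≤ m := by omega
  -- basic facts
  have hq0 : ∀ d, 1 ≤ d → d ≤ m → qprev d = 0 → qcur d = 0 ∧ qcur (d + 1) = 0 := by
    intro d h1 h2 h0
    have hf := hfeas d h1 h2
    have c1 := hqcur0 d h1 (by omega)
    have c2 := hqcur0 (d + 1) (by omega) (by omega)
    constructor <;> linarith
  have hνempty : ν (∅ : Finset ℕ) = 0 := by
    by_contra h; exact absurd (hνsupp ∅ h).1 (by simp)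
  have hcard : ∀ S : Finset ℕ, S ⊆ Finset.Icc 1 m → S.card ≤ m := by
    intro S h
    simpa [Nat.card_Icc] using Finset.card_le_card h
  -- multiplication identities
  have hmulS : ∀ d, 1 ≤ d → d ≤ m → qprev d * pS d = qcur d := by
    intro d h1 h2
    rw [hpS]
    by_cases h : 0 < qprev d
    · rw [if_pos h, mul_comm, div_mul_cancel₀ _ h.ne']
    · have h0 : qprev d = 0 := le_antisymm (not_lt.1 h) (hqprev0 d h1 h2)
      rw [if_neg h, mul_zero, (hq0 d h1 h2 h0).1]
  have hmulA : ∀ d, 1 ≤ d → d ≤ m → qprev d * pA d = qcur (d + 1) := by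
    intro d h1 h2
    rw [hpA]
    by_cases h : 0 < qprev d
    · rw [if_pos h, mul_comm, div_mul_cancel₀ _ h.ne']
    · have h0 : qprev d = 0 := le_antisymm (not_lt.1 h) (hqprev0 d h1 h2)
      rw [if_neg h, mul_zero, (hq0 d h1 h2 h0).2]
  have hmulR : ∀ d, 1 ≤ d → d ≤ m →
      qprev d * pR d = qprev d - qcur d - qcur (d + 1) := by
    intro d h1 h2
    have hS := hmulS d h1 h2
    have hA := hmulA d h1 h2
    rw [hpR]
    linear_combination -hA - hS
  -- sums in range form
  have hq1 : ∑ e ∈ Finset.range (m + 1), (((m + 1).choose (e + 1)) : ℝ) * qcur (e + 1) = 1 :=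
    (shift1 (m + 1) fun d => (((m + 1).choose d : ℕ) : ℝ) * qcur d).symm.trans hqcursum
  have hp1 : ∑ e ∈ Finset.range m, ((m.choose (e + 1)) : ℝ) * qprev (e + 1) = 1 :=
    (shift1 m fun d => ((m.choose d : ℕ) : ℝ) * qprev d).symm.trans hqprevsum
  -- A + B computation via Pascal
  have hAB : (∑ e ∈ Finset.range m, ((m.choose (e + 1)) : ℝ) * qcur (e + 1)) +
      (∑ e ∈ Finset.range m, ((m.choose (e + 1)) : ℝ) * qcur (e + 2)) = 1 - qcur 1 := by
    have h2 : ∑ e ∈ Finset.range (m + 1), (((m + 1).choose (e + 1)) : ℝ) * qcur (e + 1)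
        = ∑ e ∈ Finset.range (m + 1),
            ((m.choose e : ℝ) * qcur (e + 1) + (m.choose (e + 1) : ℝ) * qcur (e + 1)) := by
      refine Finset.sum_congr rfl fun e _ => ?_
      rw [Nat.choose_succ_succ, Nat.cast_add, add_mul]
    rw [h2, Finset.sum_add_distrib] at hq1
    have h3 : ∑ e ∈ Finset.range (m + 1), (m.choose e : ℝ) * qcur (e + 1)
        = (∑ e ∈ Finset.range m, ((m.choose (e + 1)) : ℝ) * qcur (e + 2)) + qcur 1 := by
      rw [Finset.sum_range_succ' (fun e => (m.choose e : ℝ) * qcur (e + 1)) m]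
      norm_num
    have h4 : ∑ e ∈ Finset.range (m + 1), (m.choose (e + 1) : ℝ) * qcur (e + 1)
        = ∑ e ∈ Finset.range m, ((m.choose (e + 1)) : ℝ) * qcur (e + 1) := by
      rw [Finset.sum_range_succ]
      simp [Nat.choose_succ_self]
    rw [h3, h4] at hq1
    linarith
  -- the Replace sum
  have hRsum : ∑ S' ∈ (Finset.Icc 1 m).powerset, ν S' * pR S'.card = qcur 1 := by
    have hterm : ∀ S' ∈ (Finset.Icc 1 m).powerset, ν S' * pR S'.card
        = (fun d => if d = 0 then (0 : ℝ) else qprev d - qcur d - qcur (d + 1)) S'.card := by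
      intro S' hS'
      rw [Finset.mem_powerset] at hS'
      rcases S'.eq_empty_or_nonempty with rfl | hne
      · simp [hνempty]
      · have h1 : 1 ≤ S'.card := Finset.card_pos.2 hne
        have h2 := hcard S' hS'
        simp only [if_neg (by omega : ¬ S'.card = 0)]
        rw [hνq S' hne hS']
        exact hmulR _ h1 h2
    have hpow := Finset.sum_powerset_apply_card
      (f := fun d => if d = 0 then (0 : ℝ) else qprev d - qcur d - qcur (d + 1))
      (x := Finset.Icc 1 m)
    rw [Finset.sum_congr rfl hterm, hpow]
    simp only [Nat.card_Icc, Nat.add_sub_cancel, nsmul_eq_mul]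
    rw [Finset.sum_range_succ'
      (fun d => (m.choose d : ℝ) * (if d = 0 then (0 : ℝ) else qprev d - qcur d - qcur (d + 1))) m]
    simp only [Nat.succ_ne_zero, if_false, if_pos rfl, if_true, mul_zero, add_zero, Nat.add_eq_zero,
      one_ne_zero, and_false, ite_false]
    have expand : ∑ e ∈ Finset.range m,
        (m.choose (e + 1) : ℝ) * (qprev (e + 1) - qcur (e + 1) - qcur (e + 1 + 1))
        = (∑ e ∈ Finset.range m, ((m.choose (e + 1)) : ℝ) * qprev (e + 1))
          - (∑ e ∈ Finset.range m, ((m.choose (e + 1)) : ℝ) * qcur (e + 1))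
          - (∑ e ∈ Finset.range m, ((m.choose (e + 1)) : ℝ) * qcur (e + 2)) := by
      rw [← Finset.sum_sub_distrib, ← Finset.sum_sub_distrib]
      refine Finset.sum_congr rfl fun e _ => by ring_nf
    rw [expand, hp1]
    linarith
  -- the main value identity
  have hval : ∀ S : Finset ℕ, S.Nonempty → S ⊆ Finset.Icc 1 (m + 1) → ν' S = qcur S.card := by
    intro S hne hsub
    rw [hν' S hsub]
    by_cases hiS : (m + 1) ∈ S
    · by_cases hSi : S = ({m + 1} : Finset ℕ)
      · rw [if_neg (not_not_intro hiS), if_neg (not_not_intro hSi), hSi,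
          Finset.card_singleton]
        exact hRsum
      · rw [if_neg (not_not_intro hiS), if_pos hSi]
        have hsub' : S.erase (m + 1) ⊆ Finset.Icc 1 m := by
          intro x hx
          have hx1 := hsub (Finset.mem_of_mem_erase hx)
          have hxne : x ≠ m + 1 := Finset.ne_of_mem_erase hx
          simp only [Finset.mem_Icc] at hx1 ⊢
          omega
        have hne' : (S.erase (m + 1)).Nonempty := by
          obtain ⟨x, hx, hxne⟩ : ∃ x ∈ S, x ≠ m + 1 := by
            by_contra h
            push_neg at h
            exact hSi (Finset.eq_singleton_iff_unique_mem.2 ⟨hiS, h⟩)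
          exact ⟨x, Finset.mem_erase.2 ⟨hxne, hx⟩⟩
        have hce : (S.erase (m + 1)).card = S.card - 1 := Finset.card_erase_of_mem hiS
        have h1 : 1 ≤ S.card - 1 := by
          have := Finset.card_pos.2 hne'
          omega
        have h2 : S.card - 1 ≤ m := hce ▸ hcard _ hsub'
        rw [hνq _ hne' hsub', hce, hmulA _ h1 h2]
        congr 1
        have : 1 ≤ S.card := Finset.card_pos.2 hne
        omega
    · rw [if_pos hiS]
      have hsub' : S ⊆ Finset.Icc 1 m := by
        intro x hx
        have hx1 := hsub hx
        have hxne : x ≠ m + 1 := fun h => hiS (h ▸ hx)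
        simp only [Finset.mem_Icc] at hx1 ⊢
        omega
      have h1 : 1 ≤ S.card := Finset.card_pos.2 hne
      have h2 := hcard S hsub'
      rw [hνq S hne hsub']
      exact hmulS _ h1 h2
  refine ⟨?_, ?_, hval⟩
  · intro S hsub
    rcases S.eq_empty_or_nonempty with rfl | hne
    · rw [hν' ∅ (Finset.empty_subset _)]
      simp [hνempty]
    · rw [hval S hne hsub]
      refine hqcur0 _ (Finset.card_pos.2 hne) ?_
      simpa [Nat.card_Icc] using Finset.card_le_card hsub
  · have hterm : ∀ S ∈ (Finset.Icc 1 (m + 1)).powerset, ν' S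
        = (fun d => if d = 0 then (0 : ℝ) else qcur d) S.card := by
      intro S hS
      rw [Finset.mem_powerset] at hS
      rcases S.eq_empty_or_nonempty with rfl | hne
      · rw [hν' ∅ (Finset.empty_subset _)]
        simp [hνempty]
      · have h1 : 1 ≤ S.card := Finset.card_pos.2 hne
        rw [hval S hne hS]
        simp only [if_neg (by omega : ¬ S.card = 0)]
    have hpow := Finset.sum_powerset_apply_card
      (f := fun d => if d = 0 then (0 : ℝ) else qcur d)
      (x := Finset.Icc 1 (m + 1))
    rw [Finset.sum_congr rfl hterm, hpow]
    simp only [Nat.card_Icc, Nat.add_sub_cancel, nsmul_eq_mul]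
    rw [Finset.sum_range_succ'
      (fun d => ((m + 1).choose d : ℝ) * (if d = 0 then (0 : ℝ) else qcur d)) (m + 1)]
    simp only [Nat.succ_ne_zero, if_false, if_pos rfl, if_true, mul_zero, add_zero, Nat.add_eq_zero,
      one_ne_zero, and_false, ite_false]
    exact hq1
end

section
/- Let K ≥ 2 and let μ(1), ..., μ(K−1) be nonnegative reals with Σ_{d=1}^{i−1} μ(d) ≤ 1 for every 2 ≤ i ≤ K. Define the invariant XDD sequence by μ_i(d) = μ(d) for 1 ≤ d ≤ i−1 and μ_i(i) = 1 − Σ_{d=1}^{i−1} μ(d), and set q_i(d) = μ_i(d)/C(i,d). Then the RECIPE-feasibility inequalities q_{i−1}(d) ≥ q_i(d) + q_i(d+1) hold for all 2 ≤ i ≤ K and 1 ≤ d ≤ i−1 if and only if d·μ(d) ≥ (d+1)·μ(d+1) for every 1 ≤ d ≤ K−2. -/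
open Finset

lemma key_iff_aux (i d : ℕ) (hd : 1 ≤ d) (hdi : d + 2 ≤ i) (x y : ℝ) :
    x / (((i - 1).choose d : ℕ) : ℝ) ≥ x / ((i.choose d : ℕ) : ℝ) +
      y / ((i.choose (d + 1) : ℕ) : ℝ) ↔ (d : ℝ) * x ≥ ((d : ℝ) + 1) * y := by
  have hdi' : d ≤ i - 1 := by omega
  have hA : 0 < (((i - 1).choose d : ℕ) : ℝ) := by
    exact_mod_cast Nat.choose_pos hdi'
  have hB : 0 < ((i.choose d : ℕ) : ℝ) := by
    exact_mod_cast Nat.choose_pos (by omega : d ≤ i)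
  have hC : 0 < ((i.choose (d + 1) : ℕ) : ℝ) := by
    exact_mod_cast Nat.choose_pos (by omega : d + 1 ≤ i)
  have hs : 0 < (i : ℝ) - d := by
    have : (d : ℝ) < i := by exact_mod_cast (by omega : d < i)
    linarith
  have hi : (0 : ℝ) < i := by exact_mod_cast (by omega : 0 < i)
  have hle : d ≤ i := by omega
  have hA' : (((i - 1).choose d : ℕ) : ℝ) * i = ((i.choose d : ℕ) : ℝ) * ((i : ℝ) - d) := by
    have h := Nat.choose_mul_succ_eq (i - 1) d
    have h1 : i - 1 + 1 = i := by omega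
    rw [h1] at h
    have h' := congrArg (Nat.cast (R := ℝ)) h
    push_cast [Nat.cast_sub hle] at h'
    exact h'
  have hC' : ((i.choose (d + 1) : ℕ) : ℝ) * ((d : ℝ) + 1) =
      ((i.choose d : ℕ) : ℝ) * ((i : ℝ) - d) := by
    have h' := congrArg (Nat.cast (R := ℝ)) (Nat.choose_succ_right_eq i d)
    push_cast [Nat.cast_sub hle] at h'
    exact h'
  set A := (((i - 1).choose d : ℕ) : ℝ)
  set B := ((i.choose d : ℕ) : ℝ)
  set C := ((i.choose (d + 1) : ℕ) : ℝ)
  have hD : 0 < B * ((i : ℝ) - d) := by positivity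
  have e1 : x / A = x * i / (B * ((i : ℝ) - d)) := by
    rw [div_eq_div_iff hA.ne' hD.ne']; linear_combination (-x) * hA'
  have e2 : x / B = x * ((i : ℝ) - d) / (B * ((i : ℝ) - d)) := by
    rw [mul_div_mul_right x B (ne_of_gt hs)]
  have e3 : y / C = y * ((d : ℝ) + 1) / (B * ((i : ℝ) - d)) := by
    rw [div_eq_div_iff hC.ne' hD.ne']; linear_combination (-y) * hC'
  rw [e1, e2, e3, ← add_div, ge_iff_le, div_le_div_iff_of_pos_right hD]
  constructor <;> intro h <;> nlinarith [h]

/-- Theorem 4.2 of the paper. An invariant XDD sequence, determined by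
the common masses `μ d` via `μseq i d = μ d` for `d ≤ i-1` and
`μseq i i = 1 - ∑_{d<i} μ d`, with per-subset probabilities `q i d = μseq i d / C(i,d)`,
is RECIPE-feasible iff `d·μ(d) ≥ (d+1)·μ(d+1)` for every `1 ≤ d ≤ K-2`. -/
theorem invariant_xdd_recipe_feasible_iff
    (K : ℕ) (hK : 2 ≤ K) (μ : ℕ → ℝ)
    (hμ0 : ∀ d, 1 ≤ d → d ≤ K - 1 → 0 ≤ μ d)
    (hμsum : ∀ i, 2 ≤ i → i ≤ K → ∑ d ∈ Finset.Icc 1 (i - 1), μ d ≤ 1)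
    (μseq : ℕ → ℕ → ℝ)
    (hμseq1 : ∀ i d, 1 ≤ i → i ≤ K → 1 ≤ d → d ≤ i - 1 → μseq i d = μ d)
    (hμseq2 : ∀ i, 1 ≤ i → i ≤ K →
      μseq i i = 1 - ∑ d ∈ Finset.Icc 1 (i - 1), μ d)
    (q : ℕ → ℕ → ℝ)
    (hq : ∀ i d, q i d = μseq i d / (i.choose d : ℝ)) :
    (∀ i d, 2 ≤ i → i ≤ K → 1 ≤ d → d ≤ i - 1 →
      q (i - 1) d ≥ q i d + q i (d + 1)) ↔
    (∀ d, 1 ≤ d → d ≤ K - 2 → (d : ℝ) * μ d ≥ ((d : ℝ) + 1) * μ (d + 1)) := by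
  constructor
  · intro h d hd1 hdK
    have h2 : d + 2 ≤ K := by omega
    have hfe := h (d + 2) d (by omega) h2 hd1 (by omega)
    rw [hq, hq, hq] at hfe
    have e1 : μseq (d + 2 - 1) d = μ d := hμseq1 (d + 1) d (by omega) (by omega) hd1 (by omega)
    have e2 : μseq (d + 2) d = μ d := hμseq1 (d + 2) d (by omega) h2 hd1 (by omega)
    have e3 : μseq (d + 2) (d + 1) = μ (d + 1) :=
      hμseq1 (d + 2) (d + 1) (by omega) h2 (by omega) (by omega)
    rw [e1, e2, e3] at hfe
    exact (key_iff_aux (d + 2) d hd1 (le_refl _) (μ d) (μ (d + 1))).mp hfe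
  · intro h i d h2 hiK hd1 hd
    by_cases hcase : d = i - 1
    · subst hcase
      rw [hq, hq, hq]
      have e1 : μseq (i - 1) (i - 1) = 1 - ∑ d ∈ Finset.Icc 1 (i - 1 - 1), μ d :=
        hμseq2 (i - 1) (by omega) (by omega)
      have e2 : μseq i (i - 1) = μ (i - 1) := hμseq1 i (i - 1) (by omega) hiK (by omega) (by omega)
      have hde : i - 1 + 1 = i := by omega
      have e3 : μseq i (i - 1 + 1) = 1 - ∑ d ∈ Finset.Icc 1 (i - 1), μ d := by
        rw [hde]; exact hμseq2 i (by omega) hiK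
      rw [e1, e2, e3, hde]
      have c1 : ((i - 1).choose (i - 1) : ℝ) = 1 := by simp
      have c2 : (i.choose i : ℝ) = 1 := by simp
      have c3 : (i.choose (i - 1) : ℝ) = i := by
        rw [Nat.choose_symm (by omega : 1 ≤ i), Nat.choose_one_right]
      rw [c1, c2, c3, div_one, div_one]
      have hsplit : ∑ d ∈ Finset.Icc 1 (i - 1), μ d =
          ∑ d ∈ Finset.Icc 1 (i - 1 - 1), μ d + μ (i - 1) := by
        have : i - 1 = (i - 1 - 1) + 1 := by omega
        rw [this, Finset.sum_Icc_succ_top (by omega)]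
        congr 1 <;> omega
      have hμpos : 0 ≤ μ (i - 1) := hμ0 (i - 1) (by omega) (by omega)
      have hdiv : μ (i - 1) / (i : ℝ) ≤ μ (i - 1) := by
        apply div_le_self hμpos
        exact_mod_cast (by omega : 1 ≤ i)
      rw [hsplit]
      linarith
    · have hd2 : d + 2 ≤ i := by omega
      rw [hq, hq, hq]
      have e1 : μseq (i - 1) d = μ d := hμseq1 (i - 1) d (by omega) (by omega) hd1 (by omega)
      have e2 : μseq i d = μ d := hμseq1 i d (by omega) hiK hd1 (by omega)
      have e3 : μseq i (d + 1) = μ (d + 1) := hμseq1 i (d + 1) (by omega) hiK (by omega) (by omega)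
      rw [e1, e2, e3]
      exact (key_iff_aux i d hd1 hd2 (μ d) (μ (d + 1))).mpr (h d hd1 (by omega))
end

section
/- Let K ≥ 2 and define, for 1 ≤ k ≤ K, the Shifted Soliton distributions μ_k(d) = 1/(d(d+1)) for 1 ≤ d ≤ k−1 and μ_k(k) = 1/k, and set q_k(d) = μ_k(d)/C(k,d). Then for every 2 ≤ i ≤ K and 1 ≤ d ≤ i−1, the RECIPE-feasibility inequality q_{i−1}(d) ≥ q_i(d) + q_i(d+1) holds; hence the Shifted Soliton XDD sequence is RECIPE-feasible for every K. -/
open Finset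

/-- The Shifted Soliton XDD sequence
(`μ_k(d) = 1/(d(d+1))` for `1 ≤ d ≤ k-1`, `μ_k(k) = 1/k`, with per-subset
probabilities `q k d = μ_k(d)/C(k,d)`) satisfies the RECIPE-feasibility
inequalities for every `K`. -/
theorem shifted_soliton_recipe_feasible
    (K : ℕ) (hK : 2 ≤ K)
    (μ : ℕ → ℕ → ℝ)
    (hμ1 : ∀ k d, 1 ≤ k → k ≤ K → 1 ≤ d → d ≤ k - 1 →
      μ k d = 1 / ((d : ℝ) * ((d : ℝ) + 1)))
    (hμ2 : ∀ k, 1 ≤ k → k ≤ K → μ k k = 1 / (k : ℝ))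
    (q : ℕ → ℕ → ℝ)
    (hq : ∀ k d, q k d = μ k d / ((k.choose d : ℕ) : ℝ)) :
    ∀ i d, 2 ≤ i → i ≤ K → 1 ≤ d → d ≤ i - 1 →
      q (i - 1) d ≥ q i d + q i (d + 1) := by
  intro i d h2 hiK h1d hdi
  obtain ⟨n, rfl⟩ : ∃ n, i = n + 1 := ⟨i - 1, by omega⟩
  have hn1 : 1 ≤ n := by omega
  have hdn : d ≤ n := by omega
  have hsimp : n + 1 - 1 = n := rfl
  rw [hsimp]
  have hd0 : (0:ℝ) < (d:ℝ) := by exact_mod_cast h1d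
  have hnR : (1:ℝ) ≤ (n:ℝ) := by exact_mod_cast hn1
  rcases eq_or_lt_of_le hdn with hdeq | hdlt
  · -- d = n
    subst hdeq
    rw [hq, hq, hq, hμ2 d (by omega) (by omega),
        hμ1 (d+1) d (by omega) (by omega) h1d (by omega),
        hμ2 (d+1) (by omega) (by omega),
        Nat.choose_self, Nat.choose_succ_self_right, Nat.choose_self]
    push_cast
    rw [ge_iff_le]
    have hd1 : (0:ℝ) < (d:ℝ) + 1 := by linarith
    rw [div_one, div_one, div_div,
        div_add_div _ _ (by positivity) (by positivity),
        div_le_div_iff₀ (by positivity) (by positivity)]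
    nlinarith [hd0, hd1, mul_pos hd0 hd1, mul_pos (mul_pos hd0 hd1) hd1]
  · -- d < n
    have hkey1 : ((n+1).choose (d+1) : ℝ) * (d+1) = (n+1) * (n.choose d) := by
      have := Nat.add_one_mul_choose_eq n d
      exact_mod_cast congrArg (Nat.cast : ℕ → ℝ) this.symm
    have hkey2 : ((n+1).choose d : ℝ) * ((n:ℝ) + 1 - d) = (n+1) * (n.choose d) := by
      have h := Nat.choose_succ_right_eq (n+1) d
      have h' : ((n+1).choose (d+1) : ℝ) * (d+1) = ((n+1).choose d : ℝ) * ((n:ℝ)+1-(d:ℝ)) := by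
        have : ((n+1).choose (d+1) * (d+1) : ℕ) = ((n+1).choose d * (n + 1 - d) : ℕ) := h
        have := congrArg (Nat.cast : ℕ → ℝ) this
        push_cast [Nat.cast_sub (by omega : d ≤ n + 1)] at this
        linarith [this]
      linarith [hkey1, h']
    have hc1 : (0:ℝ) < (n.choose d : ℝ) := by
      exact_mod_cast Nat.choose_pos hdn
    have hc2 : (0:ℝ) < ((n+1).choose d : ℝ) := by
      exact_mod_cast Nat.choose_pos (by omega : d ≤ n + 1)
    have hc3 : (0:ℝ) < ((n+1).choose (d+1) : ℝ) := by
      exact_mod_cast Nat.choose_pos (by omega : d + 1 ≤ n + 1)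
    rw [hq, hq, hq, hμ1 n d (by omega) (by omega) h1d (by omega),
        hμ1 (n+1) d (by omega) (by omega) h1d (by omega),
        hμ1 (n+1) (d+1) (by omega) (by omega) (by omega) (by omega)]
    have hnd : (0:ℝ) < (n:ℝ) + 1 - d := by
      have : (d:ℝ) < n := by exact_mod_cast hdlt
      linarith
    have hb : ((n+1).choose d : ℝ) = ((n:ℝ)+1) * (n.choose d) / ((n:ℝ)+1-d) := by
      field_simp
      linarith [hkey2]
    have hc : ((n+1).choose (d+1) : ℝ) = ((n:ℝ)+1) * (n.choose d) / ((d:ℝ)+1) := by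
      field_simp
      linarith [hkey1]
    push_cast
    push_cast at hb hc
    rw [hb, hc, ge_iff_le]
    have hd1 : (0:ℝ) < (d:ℝ) + 1 := by linarith
    have hd2 : (0:ℝ) < (d:ℝ) + 2 := by linarith
    have hn1' : (0:ℝ) < (n:ℝ) + 1 := by linarith
    have e1 : 1 / ((d:ℝ) * ((d:ℝ) + 1)) / (((n:ℝ)+1) * (n.choose d) / ((n:ℝ)+1-(d:ℝ)))
        = ((n:ℝ)+1-(d:ℝ)) / ((d:ℝ) * ((d:ℝ)+1) * (((n:ℝ)+1) * (n.choose d))) := by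
      field_simp
    have e2 : 1 / (((d:ℝ) + 1) * ((d:ℝ) + 1 + 1)) / (((n:ℝ)+1) * (n.choose d) / ((d:ℝ)+1))
        = 1 / (((d:ℝ)+2) * (((n:ℝ)+1) * (n.choose d))) := by
      field_simp
      ring
    have e3 : 1 / ((d:ℝ) * ((d:ℝ) + 1)) / ((n.choose d : ℝ))
        = 1 / ((d:ℝ) * ((d:ℝ) + 1) * (n.choose d)) := by
      rw [div_div]
    rw [e1, e2, e3, div_add_div _ _ (by positivity) (by positivity),
        div_le_div_iff₀ (by positivity) (by positivity)]
    nlinarith [mul_pos (mul_pos (mul_pos (mul_pos (mul_pos hd0 hd0) hd1) hn1') hc1) hc1,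
      mul_pos hc1 hc1, mul_pos hd0 hd1, mul_pos hnd hd1]
end
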